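/- (Inf-sup stability) There exists a constant β' > 0, independent of the partition, such that for every partition α = x_0 < x_1 < ... < x_n = β with n ≥ 2 and every function v_h = Σ_{i=0}^n c_i φ_i with coefficients c_i ∈ ℝ, one has ‖v_h‖_{L²(α,β)} ≤ β' · sup { (∫_α^β μ_h(x) v_h(x) dx) / ‖μ_h‖_{L²(α,β)} : μ_h = Σ_{i=0}^n d_i λ_i, d_i ∈ ℝ, μ_h ≠ 0 in L²(α,β) }, where ‖f‖_{L²(α,β)} = (∫_α^β f(x)² dx)^{1/2}. -/

import Mathlib

open intervalIntegral

/-- The standard hat (piecewise linear nodal) basis function `φ_i` associated with the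
partition `x 0 < x 1 < ... < x n`.  The branch on `[x_{i-1}, x_i]` is omitted when `i = 0`
and the branch on `[x_i, x_{i+1}]` is omitted when `i = n`. -/
noncomputable def hatFn (x : ℕ → ℝ) (n i : ℕ) : ℝ → ℝ := fun t =>
  if 0 < i ∧ x (i-1) ≤ t ∧ t ≤ x i then (t - x (i-1)) / (x i - x (i-1))
  else if i < n ∧ x i ≤ t ∧ t ≤ x (i+1) then (x (i+1) - t) / (x (i+1) - x i)
  else 0

/-- The biorthogonal basis function `λ_i`. -/
noncomputable def biorthFn (x : ℕ → ℝ) (n i : ℕ) : ℝ → ℝ := fun t =>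
  if 0 < i ∧ x (i-1) ≤ t ∧ t < x i then (2*(t - x (i-1)) + (t - x i)) / (x i - x (i-1))
  else if i < n ∧ x i ≤ t ∧ t < x (i+1) then (2*(t - x (i+1)) + (t - x i)) / (x i - x (i+1))
  else 0

/-- The piecewise derivative `u_h'` of the interpolant `u_h = Σ_j u(x_j) φ_j`:
on each open subinterval `(x_j, x_{j+1})` it is the constant
`(u(x_{j+1}) - u(x_j)) / (x_{j+1} - x_j)`, and it is (arbitrarily) `0` at grid points and
outside `[x 0, x n]`. -/
noncomputable def interpDeriv (x : ℕ → ℝ) (n : ℕ) (u : ℝ → ℝ) : ℝ → ℝ := fun t =>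
  ∑ j ∈ Finset.range n,
    if x j < t ∧ t < x (j+1) then (u (x (j+1)) - u (x j)) / (x (j+1) - x j) else 0

/-- The recovered gradient value
`g_i = (∫_α^β u_h' λ_i dx) / (∫_α^β φ_i λ_i dx)` with `α = x 0`, `β = x n`. -/
noncomputable def recGrad (x : ℕ → ℝ) (n : ℕ) (u : ℝ → ℝ) (i : ℕ) : ℝ :=
  (∫ t in (x 0)..(x n), interpDeriv x n u t * biorthFn x n i t) /
  (∫ t in (x 0)..(x n), hatFn x n i t * biorthFn x n i t)

namespace InfSupAux

variable {x : ℕ → ℝ} {n : ℕ}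

lemma mono_aux (hx : ∀ i < n, x i < x (i+1)) :
    ∀ l, l ≤ n → ∀ k, k ≤ l → x k ≤ x l := by
  intro l
  induction l with
  | zero => intro _ k hk; interval_cases k; exact le_rfl
  | succ m ih =>
    intro hln k hk
    rcases Nat.eq_or_lt_of_le hk with h | h
    · exact h ▸ le_rfl
    · exact (ih (by omega) k (by omega)).trans (hx m (by omega)).le

lemma hat_eval (hx : ∀ i < n, x i < x (i+1)) {j : ℕ} (hj : j < n) {t : ℝ}
    (ht : t ∈ Set.Ioo (x j) (x (j+1))) {i : ℕ} (hi : i ≤ n) :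
    hatFn x n i t =
      if i = j then (x (j+1) - t)/(x (j+1) - x j)
      else if i = j+1 then (t - x j)/(x (j+1) - x j) else 0 := by
  obtain ⟨ht1, ht2⟩ := ht
  rcases eq_or_ne i j with rfl | hij
  · have hc1 : ¬ (0 < i ∧ x (i-1) ≤ t ∧ t ≤ x i) := by
      rintro ⟨-, -, h⟩; linarith
    simp only [hatFn, if_neg hc1, if_pos (show i < n ∧ x i ≤ t ∧ t ≤ x (i+1) from
      ⟨hj, ht1.le, ht2.le⟩), if_pos rfl]
    simp
  rcases eq_or_ne i (j+1) with rfl | hij1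
  · simp only [hatFn, if_pos (show 0 < j+1 ∧ x (j+1-1) ≤ t ∧ t ≤ x (j+1) from
      ⟨by omega, by simpa using ht1.le, ht2.le⟩), if_neg hij, if_pos rfl]
    simp
  · have hcase : i + 1 ≤ j ∨ j + 1 ≤ i - 1 := by omega
    have hc1 : ¬ (0 < i ∧ x (i-1) ≤ t ∧ t ≤ x i) := by
      rintro ⟨hi0, h1, h2⟩
      rcases hcase with h | h
      · have : x i ≤ x j := mono_aux hx j (by omega) i (by omega)
        linarith
      · have : x (j+1) ≤ x (i-1) := mono_aux hx (i-1) (by omega) (j+1) h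
        linarith
    have hc2 : ¬ (i < n ∧ x i ≤ t ∧ t ≤ x (i+1)) := by
      rintro ⟨hin, h1, h2⟩
      rcases hcase with h | h
      · have : x (i+1) ≤ x j := mono_aux hx j (by omega) (i+1) h
        linarith
      · have : x (j+1) ≤ x i := mono_aux hx i (by omega) (j+1) (by omega)
        linarith
    simp only [if_neg hij, if_neg hij1, hatFn, if_neg hc1, if_neg hc2]

lemma biorth_eval (hx : ∀ i < n, x i < x (i+1)) {j : ℕ} (hj : j < n) {t : ℝ}
    (ht : t ∈ Set.Ioo (x j) (x (j+1))) {i : ℕ} (hi : i ≤ n) :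
    biorthFn x n i t =
      if i = j then (2*(t - x (j+1)) + (t - x j)) / (x j - x (j+1))
      else if i = j+1 then (2*(t - x j) + (t - x (j+1))) / (x (j+1) - x j) else 0 := by
  obtain ⟨ht1, ht2⟩ := ht
  rcases eq_or_ne i j with rfl | hij
  · have hc1 : ¬ (0 < i ∧ x (i-1) ≤ t ∧ t < x i) := by
      rintro ⟨-, -, h⟩; linarith
    simp only [biorthFn, if_neg hc1, if_pos (show i < n ∧ x i ≤ t ∧ t < x (i+1) from
      ⟨hj, ht1.le, ht2⟩), if_pos rfl]
    simp
  rcases eq_or_ne i (j+1) with rfl | hij1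
  · simp only [biorthFn, if_pos (show 0 < j+1 ∧ x (j+1-1) ≤ t ∧ t < x (j+1) from
      ⟨by omega, by simpa using ht1.le, ht2⟩), if_neg hij, if_pos rfl]
    simp [mul_comm]
  · have hcase : i + 1 ≤ j ∨ j + 1 ≤ i - 1 := by omega
    have hc1 : ¬ (0 < i ∧ x (i-1) ≤ t ∧ t < x i) := by
      rintro ⟨hi0, h1, h2⟩
      rcases hcase with h | h
      · have : x i ≤ x j := mono_aux hx j (by omega) i (by omega)
        linarith
      · have : x (j+1) ≤ x (i-1) := mono_aux hx (i-1) (by omega) (j+1) h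
        linarith
    have hc2 : ¬ (i < n ∧ x i ≤ t ∧ t < x (i+1)) := by
      rintro ⟨hin, h1, h2⟩
      rcases hcase with h | h
      · have : x (i+1) ≤ x j := mono_aux hx j (by omega) (i+1) h
        linarith
      · have : x (j+1) ≤ x i := mono_aux hx i (by omega) (j+1) (by omega)
        linarith
    simp only [if_neg hij, if_neg hij1, biorthFn, if_neg hc1, if_neg hc2]

lemma hat_sum (hx : ∀ i < n, x i < x (i+1)) {j : ℕ} (hj : j < n) {t : ℝ}
    (ht : t ∈ Set.Ioo (x j) (x (j+1))) (e : ℕ → ℝ) :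
    ∑ i ∈ Finset.range (n+1), e i * hatFn x n i t
      = (e j * (x (j+1) - t) + e (j+1) * (t - x j)) / (x (j+1) - x j) := by
  have hne : x (j+1) - x j ≠ 0 := by have := hx j hj; linarith
  have key : ∀ i ∈ Finset.range (n+1), e i * hatFn x n i t =
      (if i = j then e j * ((x (j+1) - t)/(x (j+1) - x j)) else 0)
      + (if i = j+1 then e (j+1) * ((t - x j)/(x (j+1) - x j)) else 0) := by
    intro i hi
    rw [hat_eval hx hj ⟨ht.1, ht.2⟩ (by simpa [Nat.lt_succ_iff] using hi)]
    rcases eq_or_ne i j with rfl | h1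
    · simp [show ¬ (i = i+1) from by omega]
    rcases eq_or_ne i (j+1) with rfl | h2
    · simp [h1]
    · simp [h1, h2]
  rw [Finset.sum_congr rfl key, Finset.sum_add_distrib,
    Finset.sum_ite_eq' (Finset.range (n+1)) j, Finset.sum_ite_eq' (Finset.range (n+1)) (j+1),
    if_pos (Finset.mem_range.mpr (by omega)), if_pos (Finset.mem_range.mpr (by omega))]
  field_simp

lemma biorth_sum (hx : ∀ i < n, x i < x (i+1)) {j : ℕ} (hj : j < n) {t : ℝ}
    (ht : t ∈ Set.Ioo (x j) (x (j+1))) (e : ℕ → ℝ) :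
    ∑ i ∈ Finset.range (n+1), e i * biorthFn x n i t
      = ((e j * (x j + 2*x (j+1)) - e (j+1) * (2*x j + x (j+1)))
          + (3*(e (j+1) - e j)) * t) / (x (j+1) - x j) := by
  have hne : x (j+1) - x j ≠ 0 := by have := hx j hj; linarith
  have key : ∀ i ∈ Finset.range (n+1), e i * biorthFn x n i t =
      (if i = j then e j * ((2*(t - x (j+1)) + (t - x j)) / (x j - x (j+1))) else 0)
      + (if i = j+1 then e (j+1) * ((2*(t - x j) + (t - x (j+1))) / (x (j+1) - x j)) else 0) := by
    intro i hi
    rw [biorth_eval hx hj ⟨ht.1, ht.2⟩ (by simpa [Nat.lt_succ_iff] using hi)]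
    rcases eq_or_ne i j with rfl | h1
    · simp [show ¬ (i = i+1) from by omega]
    rcases eq_or_ne i (j+1) with rfl | h2
    · simp [h1]
    · simp [h1, h2]
  rw [Finset.sum_congr rfl key, Finset.sum_add_distrib,
    Finset.sum_ite_eq' (Finset.range (n+1)) j, Finset.sum_ite_eq' (Finset.range (n+1)) (j+1),
    if_pos (Finset.mem_range.mpr (by omega)), if_pos (Finset.mem_range.mpr (by omega))]
  have h2 : x j - x (j+1) ≠ 0 := by have := hx j hj; linarith
  field_simp
  ring

open MeasureTheory

lemma integral_linlin (a b p0 p1 q0 q1 : ℝ) :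
    ∫ t in a..b, (p0 + p1*t)*(q0 + q1*t)
      = p0*q0*(b-a) + (p0*q1+p1*q0)*(b^2-a^2)/2 + p1*q1*(b^3-a^3)/3 := by
  have h : ∀ t : ℝ, HasDerivAt (fun u : ℝ => p0*q0*u + (p0*q1+p1*q0)*u^2/2 + p1*q1*u^3/3)
      ((p0 + p1*t)*(q0 + q1*t)) t := by
    intro t
    have h1 : HasDerivAt (fun u : ℝ => p0*q0*u + (p0*q1+p1*q0)*u^2/2 + p1*q1*u^3/3)
        (p0*q0*1 + (p0*q1+p1*q0)*(((2:ℕ):ℝ)*t^(2-1))/2 + p1*q1*(((3:ℕ):ℝ)*t^(3-1))/3) t := by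
      exact (((hasDerivAt_id t).const_mul (p0*q0)).add
        (((hasDerivAt_pow 2 t).const_mul (p0*q1+p1*q0)).div_const 2)).add
        (((hasDerivAt_pow 3 t).const_mul (p1*q1)).div_const 3)
    convert h1 using 1
    push_cast
    ring
  rw [intervalIntegral.integral_eq_sub_of_hasDerivAt (fun t _ => h t)
    (by apply Continuous.intervalIntegrable; continuity)]
  ring

lemma piece_integral {a b : ℝ} (hab : a < b) (f g : ℝ → ℝ) (hg : Continuous g)
    (hfg : ∀ t ∈ Set.Ioo a b, f t = g t) :
    IntervalIntegrable f volume a b ∧ ∫ t in a..b, f t = ∫ t in a..b, g t := by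
  have hb : ∀ᵐ t : ℝ ∂volume, t ≠ b := by
    rw [MeasureTheory.ae_iff]
    simp [Real.volume_singleton]
  have hae : f =ᵐ[volume.restrict (Set.Ioc a b)] g := by
    rw [Filter.EventuallyEq, MeasureTheory.ae_restrict_iff' measurableSet_Ioc]
    filter_upwards [hb] with t htb ht
    exact hfg t ⟨ht.1, lt_of_le_of_ne ht.2 htb⟩
  constructor
  · rw [intervalIntegrable_iff_integrableOn_Ioc_of_le hab.le]
    have hgi : MeasureTheory.IntegrableOn g (Set.Ioc a b) volume := by
      rw [← intervalIntegrable_iff_integrableOn_Ioc_of_le hab.le]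
      exact hg.intervalIntegrable a b
    exact hgi.congr hae.symm
  · rw [intervalIntegral.integral_of_le hab.le, intervalIntegral.integral_of_le hab.le]
    exact MeasureTheory.integral_congr_ae hae

end InfSupAux
section Part3
namespace InfSupAux
variable {x : ℕ → ℝ} {n : ℕ}
open MeasureTheory

lemma int_gg (a b A B : ℝ) (hne : b - a ≠ 0) :
    ∫ t in a..b, ((A*(b - t) + B*(t - a))/(b - a))^2
      = (b - a)*(A^2 + A*B + B^2)/3 := by
  have h : ∀ t : ℝ, ((A*(b - t) + B*(t - a))/(b - a))^2
      = ((A*b - B*a)/(b-a) + ((B - A)/(b-a))*t) * ((A*b - B*a)/(b-a) + ((B - A)/(b-a))*t) := by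
    intro t; ring
  rw [intervalIntegral.integral_congr (fun t _ => h t), integral_linlin]
  field_simp
  ring

lemma int_lg (a b A B D1 D2 : ℝ) (hne : b - a ≠ 0) :
    ∫ t in a..b, (((D1 * (a + 2*b) - D2 * (2*a + b)) + (3*(D2 - D1)) * t) / (b - a))
        * ((A*(b - t) + B*(t - a))/(b - a))
      = (b - a)*(D1*A + D2*B)/2 := by
  have h : ∀ t : ℝ, (((D1 * (a + 2*b) - D2 * (2*a + b)) + (3*(D2 - D1)) * t) / (b - a))
        * ((A*(b - t) + B*(t - a))/(b - a))
      = ((D1 * (a + 2*b) - D2 * (2*a + b))/(b-a) + ((3*(D2 - D1))/(b-a))*t)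
        * ((A*b - B*a)/(b-a) + ((B - A)/(b-a))*t) := by
    intro t; ring
  rw [intervalIntegral.integral_congr (fun t _ => h t), integral_linlin]
  field_simp
  ring

lemma int_ll (a b D1 D2 : ℝ) (hne : b - a ≠ 0) :
    ∫ t in a..b, (((D1 * (a + 2*b) - D2 * (2*a + b)) + (3*(D2 - D1)) * t) / (b - a))^2
      = (b - a)*(D1^2 - D1*D2 + D2^2) := by
  have h : ∀ t : ℝ, (((D1 * (a + 2*b) - D2 * (2*a + b)) + (3*(D2 - D1)) * t) / (b - a))^2
      = ((D1 * (a + 2*b) - D2 * (2*a + b))/(b-a) + ((3*(D2 - D1))/(b-a))*t)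
        * ((D1 * (a + 2*b) - D2 * (2*a + b))/(b-a) + ((3*(D2 - D1))/(b-a))*t) := by
    intro t; ring
  rw [intervalIntegral.integral_congr (fun t _ => h t), integral_linlin]
  field_simp
  ring

lemma piece_vv (hx : ∀ i < n, x i < x (i+1)) {j : ℕ} (hj : j < n) (f : ℕ → ℝ) :
    IntervalIntegrable (fun t => (∑ i ∈ Finset.range (n+1), f i * hatFn x n i t)^2)
      volume (x j) (x (j+1)) ∧
    ∫ t in (x j)..(x (j+1)), (∑ i ∈ Finset.range (n+1), f i * hatFn x n i t)^2
      = (x (j+1) - x j) * (f j^2 + f j * f (j+1) + f (j+1)^2) / 3 := by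
  have hab := hx j hj
  have hne : x (j+1) - x j ≠ 0 := by linarith
  obtain ⟨hint, heq⟩ := piece_integral hab
    (fun t => (∑ i ∈ Finset.range (n+1), f i * hatFn x n i t)^2)
    (fun t => ((f j * (x (j+1) - t) + f (j+1) * (t - x j))/(x (j+1) - x j))^2)
    (by continuity)
    (fun t ht => by rw [hat_sum hx hj ht f])
  exact ⟨hint, by rw [heq, int_gg _ _ _ _ hne]⟩

lemma piece_mv (hx : ∀ i < n, x i < x (i+1)) {j : ℕ} (hj : j < n) (e f : ℕ → ℝ) :
    IntervalIntegrable (fun t => (∑ i ∈ Finset.range (n+1), e i * biorthFn x n i t) *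
        (∑ i ∈ Finset.range (n+1), f i * hatFn x n i t)) volume (x j) (x (j+1)) ∧
    ∫ t in (x j)..(x (j+1)), (∑ i ∈ Finset.range (n+1), e i * biorthFn x n i t) *
        (∑ i ∈ Finset.range (n+1), f i * hatFn x n i t)
      = (x (j+1) - x j) * (e j * f j + e (j+1) * f (j+1)) / 2 := by
  have hab := hx j hj
  have hne : x (j+1) - x j ≠ 0 := by linarith
  obtain ⟨hint, heq⟩ := piece_integral hab
    (fun t => (∑ i ∈ Finset.range (n+1), e i * biorthFn x n i t) *
        (∑ i ∈ Finset.range (n+1), f i * hatFn x n i t))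
    (fun t => (((e j * (x j + 2*x (j+1)) - e (j+1) * (2*x j + x (j+1)))
          + (3*(e (j+1) - e j)) * t) / (x (j+1) - x j))
        * ((f j * (x (j+1) - t) + f (j+1) * (t - x j))/(x (j+1) - x j)))
    (by continuity)
    (fun t ht => by rw [hat_sum hx hj ht f, biorth_sum hx hj ht e])
  exact ⟨hint, by rw [heq, int_lg _ _ _ _ _ _ hne]⟩

lemma piece_mm (hx : ∀ i < n, x i < x (i+1)) {j : ℕ} (hj : j < n) (e : ℕ → ℝ) :
    IntervalIntegrable (fun t => (∑ i ∈ Finset.range (n+1), e i * biorthFn x n i t)^2)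
      volume (x j) (x (j+1)) ∧
    ∫ t in (x j)..(x (j+1)), (∑ i ∈ Finset.range (n+1), e i * biorthFn x n i t)^2
      = (x (j+1) - x j) * (e j^2 - e j * e (j+1) + e (j+1)^2) := by
  have hab := hx j hj
  have hne : x (j+1) - x j ≠ 0 := by linarith
  obtain ⟨hint, heq⟩ := piece_integral hab
    (fun t => (∑ i ∈ Finset.range (n+1), e i * biorthFn x n i t)^2)
    (fun t => (((e j * (x j + 2*x (j+1)) - e (j+1) * (2*x j + x (j+1)))
          + (3*(e (j+1) - e j)) * t) / (x (j+1) - x j))^2)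
    (by continuity)
    (fun t ht => by rw [biorth_sum hx hj ht e])
  exact ⟨hint, by rw [heq, int_ll _ _ _ _ hne]⟩

end InfSupAux
end Part3
section Part4
namespace InfSupAux
variable {x : ℕ → ℝ} {n : ℕ}
open MeasureTheory

lemma quad_zero_add {A B : ℝ} (h : A^2 + A*B + B^2 = 0) : A = 0 ∧ B = 0 := by
  have hA2 : A^2 = 0 := le_antisymm (by nlinarith [sq_nonneg (A+B), sq_nonneg B]) (sq_nonneg A)
  have hB2 : B^2 = 0 := le_antisymm (by nlinarith [sq_nonneg (A+B), sq_nonneg A]) (sq_nonneg B)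
  exact ⟨pow_eq_zero_iff two_ne_zero |>.mp hA2, pow_eq_zero_iff two_ne_zero |>.mp hB2⟩

lemma quad_zero_sub {A B : ℝ} (h : A^2 - A*B + B^2 = 0) : A = 0 ∧ B = 0 := by
  have h2 : A^2 + A*(-B) + (-B)^2 = 0 := by ring_nf; linarith [h]
  obtain ⟨h3, h4⟩ := quad_zero_add h2
  exact ⟨h3, by linarith [neg_eq_zero.mp h4]⟩

lemma glob_vv (hx : ∀ i < n, x i < x (i+1)) (f : ℕ → ℝ) :
    IntervalIntegrable (fun t => (∑ i ∈ Finset.range (n+1), f i * hatFn x n i t)^2)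
      volume (x 0) (x n) ∧
    ∫ t in (x 0)..(x n), (∑ i ∈ Finset.range (n+1), f i * hatFn x n i t)^2
      = ∑ j ∈ Finset.range n,
          (x (j+1) - x j) * (f j^2 + f j * f (j+1) + f (j+1)^2) / 3 := by
  have hint : ∀ k < n, IntervalIntegrable
      (fun t => (∑ i ∈ Finset.range (n+1), f i * hatFn x n i t)^2) volume (x k) (x (k+1)) :=
    fun k hk => (piece_vv hx hk f).1
  refine ⟨IntervalIntegrable.trans_iterate hint, ?_⟩
  rw [← intervalIntegral.sum_integral_adjacent_intervals hint]
  exact Finset.sum_congr rfl fun j hj => (piece_vv hx (Finset.mem_range.mp hj) f).2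

lemma glob_mv (hx : ∀ i < n, x i < x (i+1)) (e f : ℕ → ℝ) :
    IntervalIntegrable (fun t => (∑ i ∈ Finset.range (n+1), e i * biorthFn x n i t) *
        (∑ i ∈ Finset.range (n+1), f i * hatFn x n i t)) volume (x 0) (x n) ∧
    ∫ t in (x 0)..(x n), (∑ i ∈ Finset.range (n+1), e i * biorthFn x n i t) *
        (∑ i ∈ Finset.range (n+1), f i * hatFn x n i t)
      = ∑ j ∈ Finset.range n,
          (x (j+1) - x j) * (e j * f j + e (j+1) * f (j+1)) / 2 := by
  have hint : ∀ k < n, IntervalIntegrable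
      (fun t => (∑ i ∈ Finset.range (n+1), e i * biorthFn x n i t) *
        (∑ i ∈ Finset.range (n+1), f i * hatFn x n i t)) volume (x k) (x (k+1)) :=
    fun k hk => (piece_mv hx hk e f).1
  refine ⟨IntervalIntegrable.trans_iterate hint, ?_⟩
  rw [← intervalIntegral.sum_integral_adjacent_intervals hint]
  exact Finset.sum_congr rfl fun j hj => (piece_mv hx (Finset.mem_range.mp hj) e f).2

lemma glob_mm (hx : ∀ i < n, x i < x (i+1)) (e : ℕ → ℝ) :
    IntervalIntegrable (fun t => (∑ i ∈ Finset.range (n+1), e i * biorthFn x n i t)^2)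
      volume (x 0) (x n) ∧
    ∫ t in (x 0)..(x n), (∑ i ∈ Finset.range (n+1), e i * biorthFn x n i t)^2
      = ∑ j ∈ Finset.range n,
          (x (j+1) - x j) * (e j^2 - e j * e (j+1) + e (j+1)^2) := by
  have hint : ∀ k < n, IntervalIntegrable
      (fun t => (∑ i ∈ Finset.range (n+1), e i * biorthFn x n i t)^2) volume (x k) (x (k+1)) :=
    fun k hk => (piece_mm hx hk e).1
  refine ⟨IntervalIntegrable.trans_iterate hint, ?_⟩
  rw [← intervalIntegral.sum_integral_adjacent_intervals hint]
  exact Finset.sum_congr rfl fun j hj => (piece_mm hx (Finset.mem_range.mp hj) e).2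

/-- Cauchy–Schwarz for our concrete piecewise functions. -/
lemma cs (hx : ∀ i < n, x i < x (i+1)) (hn : 1 ≤ n) (e f : ℕ → ℝ) :
    (∫ t in (x 0)..(x n), (∑ i ∈ Finset.range (n+1), e i * biorthFn x n i t) *
        (∑ i ∈ Finset.range (n+1), f i * hatFn x n i t))
      ≤ Real.sqrt (∫ t in (x 0)..(x n), (∑ i ∈ Finset.range (n+1), e i * biorthFn x n i t)^2)
        * Real.sqrt (∫ t in (x 0)..(x n), (∑ i ∈ Finset.range (n+1), f i * hatFn x n i t)^2) := by
  obtain ⟨hIm, hQm_eq⟩ := glob_mm hx e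
  obtain ⟨hIv, hQv_eq⟩ := glob_vv hx f
  obtain ⟨hImv, hP_eq⟩ := glob_mv hx e f
  have x0n : x 0 ≤ x n := mono_aux hx n le_rfl 0 (Nat.zero_le n)
  set Qm := ∫ t in (x 0)..(x n), (∑ i ∈ Finset.range (n+1), e i * biorthFn x n i t)^2 with hQm_def
  set Qv := ∫ t in (x 0)..(x n), (∑ i ∈ Finset.range (n+1), f i * hatFn x n i t)^2 with hQv_def
  set P := ∫ t in (x 0)..(x n), (∑ i ∈ Finset.range (n+1), e i * biorthFn x n i t) *
      (∑ i ∈ Finset.range (n+1), f i * hatFn x n i t) with hP_def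
  have hQm0 : 0 ≤ Qm := intervalIntegral.integral_nonneg x0n (fun u _ => sq_nonneg _)
  have hQv0 : 0 ≤ Qv := intervalIntegral.integral_nonneg x0n (fun u _ => sq_nonneg _)
  rcases eq_or_lt_of_le hQv0 with hQv | hQv
  · -- Qv = 0 : all f i vanish, so the product integrand is 0 and P = 0
    have hnn : ∀ j ∈ Finset.range n,
        0 ≤ (x (j+1) - x j) * (f j^2 + f j * f (j+1) + f (j+1)^2) / 3 := by
      intro j hj
      have hh := hx j (Finset.mem_range.mp hj)
      have hq : 0 ≤ f j^2 + f j * f (j+1) + f (j+1)^2 := by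
        nlinarith [sq_nonneg (f j + f (j+1)), sq_nonneg (f j), sq_nonneg (f (j+1))]
      have := mul_nonneg (by linarith : (0:ℝ) ≤ x (j+1) - x j) hq
      linarith
    have hsum0 : ∑ j ∈ Finset.range n,
        (x (j+1) - x j) * (f j^2 + f j * f (j+1) + f (j+1)^2) / 3 = 0 := by
      rw [← hQv_eq]; exact hQv.symm
    have hterm := (Finset.sum_eq_zero_iff_of_nonneg hnn).mp hsum0
    have hzero : ∀ j, j < n → f j = 0 ∧ f (j+1) = 0 := by
      intro j hjn
      have h1 := hterm j (Finset.mem_range.mpr hjn)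
      have hh := hx j hjn
      have hq : f j^2 + f j * f (j+1) + f (j+1)^2 = 0 := by
        have h2 : (x (j+1) - x j) * (f j^2 + f j * f (j+1) + f (j+1)^2) = 0 := by linarith
        rcases mul_eq_zero.mp h2 with h3 | h3
        · linarith
        · exact h3
      exact quad_zero_add hq
    have hf0 : ∀ i ≤ n, f i = 0 := by
      intro i hi
      rcases Nat.lt_or_ge i n with h | h
      · exact (hzero i h).1
      · have h1 := (hzero (n-1) (by omega)).2
        rw [show n - 1 + 1 = n by omega] at h1
        rwa [le_antisymm hi h]
    have hv : ∀ u : ℝ, (∑ i ∈ Finset.range (n+1), f i * hatFn x n i u) = 0 := fun u =>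
      Finset.sum_eq_zero fun i hi => by
        rw [hf0 i (Nat.lt_succ_iff.mp (Finset.mem_range.mp hi)), zero_mul]
    have hP : P = 0 := by
      rw [hP_def]
      simp only [hv, mul_zero, intervalIntegral.integral_zero]
    rw [hP]
    positivity
  rcases eq_or_lt_of_le hQm0 with hQm | hQm
  · -- Qm = 0 : all e i vanish
    have hnn : ∀ j ∈ Finset.range n,
        0 ≤ (x (j+1) - x j) * (e j^2 - e j * e (j+1) + e (j+1)^2) := by
      intro j hj
      have hh := hx j (Finset.mem_range.mp hj)
      have hq : 0 ≤ e j^2 - e j * e (j+1) + e (j+1)^2 := by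
        nlinarith [sq_nonneg (e j - e (j+1)), sq_nonneg (e j), sq_nonneg (e (j+1))]
      exact mul_nonneg (by linarith) hq
    have hsum0 : ∑ j ∈ Finset.range n,
        (x (j+1) - x j) * (e j^2 - e j * e (j+1) + e (j+1)^2) = 0 := by
      rw [← hQm_eq]; exact hQm.symm
    have hterm := (Finset.sum_eq_zero_iff_of_nonneg hnn).mp hsum0
    have hzero : ∀ j, j < n → e j = 0 ∧ e (j+1) = 0 := by
      intro j hjn
      have h1 := hterm j (Finset.mem_range.mpr hjn)
      have hh := hx j hjn
      have hq : e j^2 - e j * e (j+1) + e (j+1)^2 = 0 := by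
        rcases mul_eq_zero.mp h1 with h3 | h3
        · linarith
        · exact h3
      exact quad_zero_sub hq
    have he0 : ∀ i ≤ n, e i = 0 := by
      intro i hi
      rcases Nat.lt_or_ge i n with h | h
      · exact (hzero i h).1
      · have h1 := (hzero (n-1) (by omega)).2
        rw [show n - 1 + 1 = n by omega] at h1
        rwa [le_antisymm hi h]
    have hm : ∀ u : ℝ, (∑ i ∈ Finset.range (n+1), e i * biorthFn x n i u) = 0 := fun u =>
      Finset.sum_eq_zero fun i hi => by
        rw [he0 i (Nat.lt_succ_iff.mp (Finset.mem_range.mp hi)), zero_mul]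
    have hP : P = 0 := by
      rw [hP_def]
      simp only [hm, zero_mul, intervalIntegral.integral_zero]
    rw [hP]
    positivity
  · -- main case : 0 < Qv, 0 < Qm
    have e1 : Real.sqrt Qv ^ 2 = Qv := Real.sq_sqrt hQv0
    have e2 : Real.sqrt Qm ^ 2 = Qm := Real.sq_sqrt hQm0
    have key : 0 ≤ ∫ u in (x 0)..(x n),
        (Real.sqrt Qv * (∑ i ∈ Finset.range (n+1), e i * biorthFn x n i u)
          - Real.sqrt Qm * (∑ i ∈ Finset.range (n+1), f i * hatFn x n i u))^2 :=
      intervalIntegral.integral_nonneg x0n (fun u _ => sq_nonneg _)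
    have hexp : (∫ u in (x 0)..(x n),
        (Real.sqrt Qv * (∑ i ∈ Finset.range (n+1), e i * biorthFn x n i u)
          - Real.sqrt Qm * (∑ i ∈ Finset.range (n+1), f i * hatFn x n i u))^2)
        = Qv * Qm - 2 * (Real.sqrt Qv * Real.sqrt Qm) * P + Qm * Qv := by
      have hcongr : (∫ u in (x 0)..(x n),
          (Real.sqrt Qv * (∑ i ∈ Finset.range (n+1), e i * biorthFn x n i u)
            - Real.sqrt Qm * (∑ i ∈ Finset.range (n+1), f i * hatFn x n i u))^2)
          = ∫ u in (x 0)..(x n),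
            (Qv * (∑ i ∈ Finset.range (n+1), e i * biorthFn x n i u)^2
              - (2 * (Real.sqrt Qv * Real.sqrt Qm)) *
                ((∑ i ∈ Finset.range (n+1), e i * biorthFn x n i u) *
                  (∑ i ∈ Finset.range (n+1), f i * hatFn x n i u))
              + Qm * (∑ i ∈ Finset.range (n+1), f i * hatFn x n i u)^2) :=
        intervalIntegral.integral_congr (fun u _ => by
          linear_combination (∑ i ∈ Finset.range (n+1), e i * biorthFn x n i u)^2 * e1
            + (∑ i ∈ Finset.range (n+1), f i * hatFn x n i u)^2 * e2)
      rw [hcongr, intervalIntegral.integral_add ((hIm.const_mul Qv).sub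
          (hImv.const_mul (2 * (Real.sqrt Qv * Real.sqrt Qm)))) (hIv.const_mul Qm),
        intervalIntegral.integral_sub (hIm.const_mul Qv)
          (hImv.const_mul (2 * (Real.sqrt Qv * Real.sqrt Qm))),
        intervalIntegral.integral_const_mul, intervalIntegral.integral_const_mul,
        intervalIntegral.integral_const_mul, ← hQm_def, ← hQv_def, ← hP_def]
    rw [hexp] at key
    have hspos : 0 < Real.sqrt Qv * Real.sqrt Qm :=
      mul_pos (Real.sqrt_pos.mpr hQv) (Real.sqrt_pos.mpr hQm)
    nlinarith [key, hspos, e1, e2]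

end InfSupAux
end Part4

open InfSupAux MeasureTheory in
/-- inf-sup stability: there is a constant `β' > 0`, independent of the
partition, such that for every partition with `n ≥ 2` and every
`v_h = Σ_i c_i φ_i`,
`‖v_h‖_{L²(α,β)} ≤ β' · sup { (∫_α^β μ_h v_h dx) / ‖μ_h‖_{L²(α,β)} : μ_h = Σ_i d_i λ_i, μ_h ≠ 0 in L² }`,
where `‖f‖_{L²(α,β)} = (∫_α^β f² dx)^{1/2}`. -/
theorem biorth_infsup_stability :
    ∃ β' : ℝ, 0 < β' ∧
      ∀ (n : ℕ) (x : ℕ → ℝ), 2 ≤ n → (∀ i < n, x i < x (i+1)) →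
        ∀ c : ℕ → ℝ,
          Real.sqrt (∫ t in (x 0)..(x n),
              (∑ i ∈ Finset.range (n+1), c i * hatFn x n i t)^2)
            ≤ β' * sSup { r : ℝ | ∃ d : ℕ → ℝ,
                Real.sqrt (∫ t in (x 0)..(x n),
                    (∑ i ∈ Finset.range (n+1), d i * biorthFn x n i t)^2) ≠ 0 ∧
                r = (∫ t in (x 0)..(x n),
                      (∑ i ∈ Finset.range (n+1), d i * biorthFn x n i t) *
                      (∑ i ∈ Finset.range (n+1), c i * hatFn x n i t)) /
                    Real.sqrt (∫ t in (x 0)..(x n),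
                      (∑ i ∈ Finset.range (n+1), d i * biorthFn x n i t)^2) } := by
  refine ⟨2, two_pos, ?_⟩
  intro n x hn hx c
  have x0n : x 0 ≤ x n := mono_aux hx n le_rfl 0 (Nat.zero_le n)
  set S := { r : ℝ | ∃ d : ℕ → ℝ,
      Real.sqrt (∫ t in (x 0)..(x n),
          (∑ i ∈ Finset.range (n+1), d i * biorthFn x n i t)^2) ≠ 0 ∧
      r = (∫ t in (x 0)..(x n),
            (∑ i ∈ Finset.range (n+1), d i * biorthFn x n i t) *
            (∑ i ∈ Finset.range (n+1), c i * hatFn x n i t)) /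
          Real.sqrt (∫ t in (x 0)..(x n),
            (∑ i ∈ Finset.range (n+1), d i * biorthFn x n i t)^2) } with hS_def
  obtain ⟨hIv, hQv_eq⟩ := glob_vv hx c
  obtain ⟨hIm, hQm_eq⟩ := glob_mm hx c
  obtain ⟨hImv, hP_eq⟩ := glob_mv hx c c
  set Qv := ∫ t in (x 0)..(x n), (∑ i ∈ Finset.range (n+1), c i * hatFn x n i t)^2 with hQv_def
  set Qm := ∫ t in (x 0)..(x n), (∑ i ∈ Finset.range (n+1), c i * biorthFn x n i t)^2 with hQm_def
  set P := ∫ t in (x 0)..(x n), (∑ i ∈ Finset.range (n+1), c i * biorthFn x n i t) *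
      (∑ i ∈ Finset.range (n+1), c i * hatFn x n i t) with hP_def
  have hQv0 : 0 ≤ Qv := intervalIntegral.integral_nonneg x0n (fun u _ => sq_nonneg _)
  have hQm0 : 0 ≤ Qm := intervalIntegral.integral_nonneg x0n (fun u _ => sq_nonneg _)
  -- key comparisons
  have h1 : Qv ≤ P := by
    rw [hQv_eq, hP_eq]
    refine Finset.sum_le_sum fun j hj => ?_
    have hh := hx j (Finset.mem_range.mp hj)
    nlinarith [sq_nonneg (c j - c (j+1)), mul_nonneg (by linarith : (0:ℝ) ≤ x (j+1) - x j)
      (sq_nonneg (c j - c (j+1)))]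
  have h2 : Qm ≤ 4 * P := by
    rw [hQm_eq, hP_eq, Finset.mul_sum]
    refine Finset.sum_le_sum fun j hj => ?_
    have hh := hx j (Finset.mem_range.mp hj)
    nlinarith [mul_nonneg (by linarith : (0:ℝ) ≤ x (j+1) - x j) (sq_nonneg (c j + c (j+1)))]
  have hP0 : 0 ≤ P := le_trans hQv0 h1
  by_cases hQm_zero : Qm = 0
  · -- degenerate case: all coefficients vanish
    have hnn : ∀ j ∈ Finset.range n,
        0 ≤ (x (j+1) - x j) * (c j^2 - c j * c (j+1) + c (j+1)^2) := by
      intro j hj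
      have hh := hx j (Finset.mem_range.mp hj)
      have hq : 0 ≤ c j^2 - c j * c (j+1) + c (j+1)^2 := by
        nlinarith [sq_nonneg (c j - c (j+1)), sq_nonneg (c j), sq_nonneg (c (j+1))]
      exact mul_nonneg (by linarith) hq
    have hterm := (Finset.sum_eq_zero_iff_of_nonneg hnn).mp (by rw [← hQm_eq]; exact hQm_zero)
    have hzero : ∀ j, j < n → c j = 0 ∧ c (j+1) = 0 := by
      intro j hjn
      have h1' := hterm j (Finset.mem_range.mpr hjn)
      have hh := hx j hjn
      have hq : c j^2 - c j * c (j+1) + c (j+1)^2 = 0 := by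
        rcases mul_eq_zero.mp h1' with h3 | h3
        · linarith
        · exact h3
      exact quad_zero_sub hq
    have hc0 : ∀ i ≤ n, c i = 0 := by
      intro i hi
      rcases Nat.lt_or_ge i n with h | h
      · exact (hzero i h).1
      · have h1' := (hzero (n-1) (by omega)).2
        rw [show n - 1 + 1 = n by omega] at h1'
        rwa [le_antisymm hi h]
    have hv : ∀ u : ℝ, (∑ i ∈ Finset.range (n+1), c i * hatFn x n i u) = 0 := fun u =>
      Finset.sum_eq_zero fun i hi => by
        rw [hc0 i (Nat.lt_succ_iff.mp (Finset.mem_range.mp hi)), zero_mul]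
    have hlhs : Real.sqrt Qv = 0 := by
      rw [hQv_def]
      simp only [hv]
      simp
    rw [hlhs]
    have hsup : 0 ≤ sSup S := by
      apply Real.sSup_nonneg
      rintro r ⟨d, hd, rfl⟩
      have : (∫ t in (x 0)..(x n),
          (∑ i ∈ Finset.range (n+1), d i * biorthFn x n i t) *
          (∑ i ∈ Finset.range (n+1), c i * hatFn x n i t)) = 0 := by
        simp only [hv, mul_zero, intervalIntegral.integral_zero]
      rw [this, zero_div]
    linarith
  · -- main case
    have hQm_pos : 0 < Qm := lt_of_le_of_ne hQm0 (Ne.symm hQm_zero)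
    have hsq_pos : 0 < Real.sqrt Qm := Real.sqrt_pos.mpr hQm_pos
    have hmem : P / Real.sqrt Qm ∈ S := ⟨c, by rw [Real.sqrt_ne_zero']; exact hQm_pos, rfl⟩
    have hbdd : BddAbove S := by
      refine ⟨Real.sqrt Qv, ?_⟩
      rintro r ⟨d, hd, rfl⟩
      have hQmd0 : 0 ≤ ∫ t in (x 0)..(x n),
          (∑ i ∈ Finset.range (n+1), d i * biorthFn x n i t)^2 :=
        intervalIntegral.integral_nonneg x0n (fun u _ => sq_nonneg _)
      have hsd : 0 < Real.sqrt (∫ t in (x 0)..(x n),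
          (∑ i ∈ Finset.range (n+1), d i * biorthFn x n i t)^2) :=
        lt_of_le_of_ne (Real.sqrt_nonneg _) (Ne.symm hd)
      rw [div_le_iff₀ hsd]
      calc (∫ t in (x 0)..(x n),
            (∑ i ∈ Finset.range (n+1), d i * biorthFn x n i t) *
            (∑ i ∈ Finset.range (n+1), c i * hatFn x n i t))
          ≤ Real.sqrt (∫ t in (x 0)..(x n),
              (∑ i ∈ Finset.range (n+1), d i * biorthFn x n i t)^2) * Real.sqrt Qv :=
            cs hx (by omega) d c
        _ = Real.sqrt Qv * Real.sqrt (∫ t in (x 0)..(x n),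
              (∑ i ∈ Finset.range (n+1), d i * biorthFn x n i t)^2) := mul_comm _ _
    have hmul : Real.sqrt Qv * Real.sqrt Qm ≤ 2 * P := by
      calc Real.sqrt Qv * Real.sqrt Qm
          ≤ Real.sqrt P * Real.sqrt (4*P) :=
            mul_le_mul (Real.sqrt_le_sqrt h1) (Real.sqrt_le_sqrt h2)
              (Real.sqrt_nonneg _) (Real.sqrt_nonneg _)
        _ = 2 * P := by
            rw [show (4:ℝ)*P = 2^2*P from by ring, Real.sqrt_mul (by positivity) P,
              Real.sqrt_sq (by norm_num : (0:ℝ) ≤ 2)]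
            linear_combination 2 * Real.mul_self_sqrt hP0
    have hchain : Real.sqrt Qv ≤ 2 * (P / Real.sqrt Qm) := by
      rw [mul_div_assoc', le_div_iff₀ hsq_pos]
      exact hmul
    have := le_csSup hbdd hmem
    linarith
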